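/- Let char F = p > 0, 1 \u2264 r \u2264 s, and k \u2265 0. Then the Jordan partition \u03bb(p^k r, p^k s, p) is the p^k-multiple of \u03bb(r,s,p): if \u03bb(r,s,p) = (\u03bb_1, \u2026, \u03bb_r), then \u03bb(p^k r, p^k s, p) consists of the parts p^k \u03bb_i, each with multiplicity p^k, for i = 1, \u2026, r. -/

import Mathlib

open Matrix Kronecker

/-- The `k × k` upper-triangular Jordan block with eigenvalue `1`. -/
def jordanBlock (F : Type*) [Zero F] [One F] (k : ℕ) : Matrix (Fin k) (Fin k) F :=
  Matrix.of fun i j => if j = i then 1 else if (j : ℕ) = (i : ℕ) + 1 then 1 else 0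

/-- `lam : Fin r → ℕ` is the Jordan partition of the square matrix `M`
(with eigenvalue 1), characterized by: `lam` is weakly decreasing with positive
parts, and for every `k` the rank of `(M - 1)^k` equals `∑ i, max (lam i - k) 0`.
Over a field this holds iff `M` is similar to the direct sum of the unipotent
Jordan blocks `J_{lam i}`. -/
def IsJordanSeq {F : Type*} [CommRing F] {n : Type*} [Fintype n] [DecidableEq n]
    {r : ℕ} (M : Matrix n n F) (lam : Fin r → ℕ) : Prop :=
  Antitone lam ∧ (∀ i, 0 < lam i) ∧
    ∀ k : ℕ, ((M - 1) ^ k).rank = ∑ i, (lam i - k)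

set_option linter.unusedSectionVars false
set_option linter.unusedVariables false


open Matrix Kronecker Polynomial TensorProduct

noncomputable section

variable (F : Type*) [Field F]

/-- truncated polynomial ring F[x]/(x^A) -/
abbrev TruncP (A : ℕ) := AdjoinRoot (X ^ A : F[X])

/-- two-variable truncated polynomial ring -/
abbrev TP (A B : ℕ) := (TruncP F A) ⊗[F] (TruncP F B)

variable {A B : ℕ}

def xx (A B : ℕ) : TP F A B := (AdjoinRoot.root _) ⊗ₜ 1
def yy (A B : ℕ) : TP F A B := 1 ⊗ₜ (AdjoinRoot.root _)
def tt (A B : ℕ) : TP F A B := xx F A B + yy F A B + xx F A B * yy F A B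

lemma xx_pow_eq_zero : xx F A B ^ A = 0 := by
  have h : (AdjoinRoot.root (X ^ A : F[X])) ^ A = 0 := by
    have := AdjoinRoot.eval₂_root (X ^ A : F[X])
    simpa using this
  simp [xx, Algebra.TensorProduct.tmul_pow, h]

lemma yy_pow_eq_zero : yy F A B ^ B = 0 := by
  have h : (AdjoinRoot.root (X ^ B : F[X])) ^ B = 0 := by
    have := AdjoinRoot.eval₂_root (X ^ B : F[X])
    simpa using this
  simp [yy, Algebra.TensorProduct.tmul_pow, h]

def truncBasis (A : ℕ) : Module.Basis (Fin A) F (TruncP F A) :=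
  (AdjoinRoot.powerBasis' (monic_X_pow A)).basis.reindex (finCongr (by simp : (X ^ A).natDegree = A))

lemma truncBasis_apply (i : Fin A) : truncBasis F A i = (AdjoinRoot.root _) ^ (i : ℕ) := by
  rw [truncBasis, Module.Basis.reindex_apply]
  rw [PowerBasis.basis_eq_pow]
  simp [AdjoinRoot.powerBasis'_gen]
  rfl

def tpBasis (A B : ℕ) : Module.Basis (Fin A × Fin B) F (TP F A B) :=
  Module.Basis.tensorProduct (truncBasis F A) (truncBasis F B)

lemma tpBasis_apply (i : Fin A) (j : Fin B) :
    tpBasis F A B (i, j) = xx F A B ^ (i : ℕ) * yy F A B ^ (j : ℕ) := by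
  simp [tpBasis, Module.Basis.tensorProduct_apply, truncBasis_apply, xx, yy,
    Algebra.TensorProduct.tmul_pow, Algebra.TensorProduct.tmul_mul_tmul]

instance : Module.Finite F (TP F A B) := Module.Finite.of_basis (tpBasis F A B)

lemma tp_finrank : Module.finrank F (TP F A B) = A * B := by
  rw [Module.finrank_eq_card_basis (tpBasis F A B)]
  simp

end

noncomputable section
open Matrix Kronecker Polynomial TensorProduct
variable (F : Type*) [Field F]

instance (A B : ℕ) [NeZero A] [NeZero B] : Nontrivial (TP F A B) := by
  have b := tpBasis F A B
  have : Nontrivial (Fin A × Fin B →₀ F) := inferInstance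
  exact b.repr.toEquiv.nontrivial

lemma tp_charP (p : ℕ) [CharP F p] (A B : ℕ) [NeZero A] [NeZero B] :
    CharP (TP F A B) p :=
  charP_of_injective_algebraMap (algebraMap F (TP F A B)).injective p

/-- the Frobenius-like algebra map F[x,y]/(x^r,y^s) → F[x,y]/(x^(qr),y^(qs)), x ↦ x^q -/
def frob (q r s : ℕ) : TP F r s →ₐ[F] TP F (q*r) (q*s) := by
  refine Algebra.TensorProduct.lift
    (AdjoinRoot.liftAlgHom _ (Algebra.ofId F _) (xx F (q*r) (q*s) ^ q) ?_)
    (AdjoinRoot.liftAlgHom _ (Algebra.ofId F _) (yy F (q*r) (q*s) ^ q) ?_) (fun a b => Commute.all _ _)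
  · rw [eval₂_X_pow, ← pow_mul]
    exact xx_pow_eq_zero F
  · rw [eval₂_X_pow, ← pow_mul]
    exact yy_pow_eq_zero F

lemma frob_xx (q r s : ℕ) : frob F q r s (xx F r s) = xx F (q*r) (q*s) ^ q := by
  simp [frob, xx, Algebra.TensorProduct.lift_tmul]

lemma frob_yy (q r s : ℕ) : frob F q r s (yy F r s) = yy F (q*r) (q*s) ^ q := by
  simp [frob, yy, Algebra.TensorProduct.lift_tmul]

lemma tt_pow_q (p : ℕ) [CharP F p] (hp : p.Prime) (k q r s : ℕ) (hq : q = p ^ k)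
    [NeZero r] [NeZero s] (hr : r ≠ 0) (hs : s ≠ 0) :
    tt F (q*r) (q*s) ^ q = frob F q r s (tt F r s) := by
  subst hq
  haveI := Fact.mk hp
  haveI : NeZero (p ^ k * r) := ⟨Nat.mul_ne_zero (pow_ne_zero _ hp.ne_zero) hr⟩
  haveI : NeZero (p ^ k * s) := ⟨Nat.mul_ne_zero (pow_ne_zero _ hp.ne_zero) hs⟩
  haveI := tp_charP F p (p ^ k * r) (p ^ k * s)
  haveI : ExpChar (TP F (p ^ k * r) (p ^ k * s)) p := ExpChar.prime hp
  set x := xx F (p^k*r) (p^k*s)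
  set y := yy F (p^k*r) (p^k*s)
  have h1x : (1 + x) ^ p ^ k = 1 + x ^ p ^ k := by
    rw [add_pow_char_pow]; simp
  have h1y : (1 + y) ^ p ^ k = 1 + y ^ p ^ k := by
    rw [add_pow_char_pow]; simp
  have key : tt F (p^k*r) (p^k*s) = (1+x)*(1+y) - 1 := by rw [tt]; ring
  rw [key, sub_pow_char_pow, mul_pow, h1x, h1y, one_pow]
  simp only [tt, map_add, _root_.map_mul, frob_xx, frob_yy]
  ring
end

noncomputable section
open Matrix Kronecker Polynomial TensorProduct
variable (F : Type*) [Field F] {A B : ℕ}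

def EE (A B : ℕ) : TP F A B ≃ₗ[F] (Fin A × Fin B → F) :=
  ((tpBasis F A B).reindex (Equiv.prodCongr Fin.revPerm Fin.revPerm)).equivFun

lemma EE_monomial (i' j' : ℕ) :
    EE F A B (xx F A B ^ i' * yy F A B ^ j') =
      fun pq : Fin A × Fin B =>
        if (pq.1 : ℕ) + 1 + i' = A ∧ (pq.2 : ℕ) + 1 + j' = B then 1 else 0 := by
  rcases lt_or_ge i' A with hi | hi
  · rcases lt_or_ge j' B with hj | hj
    · have hb : xx F A B ^ i' * yy F A B ^ j' = tpBasis F A B (⟨i', hi⟩, ⟨j', hj⟩) :=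
        (tpBasis_apply F ⟨i', hi⟩ ⟨j', hj⟩).symm
      rw [hb]
      funext pq
      have : tpBasis F A B (⟨i', hi⟩, ⟨j', hj⟩) =
          ((tpBasis F A B).reindex (Equiv.prodCongr Fin.revPerm Fin.revPerm))
            (Fin.rev ⟨i', hi⟩, Fin.rev ⟨j', hj⟩) := by
        rw [Module.Basis.reindex_apply]
        congr 1
        simp [Equiv.prodCongr]
      rw [EE, this, Module.Basis.equivFun_self]
      obtain ⟨p1, p2⟩ := pq
      have h1 := p1.isLt
      have h2 := p2.isLt
      simp only [Prod.ext_iff, Fin.ext_iff, Fin.val_rev]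
      by_cases hc : (p1 : ℕ) + 1 + i' = A ∧ (p2 : ℕ) + 1 + j' = B
      · rw [if_pos, if_pos hc]; omega
      · rw [if_neg, if_neg hc]; omega
    · have hz : yy F A B ^ j' = 0 := by
        have : j' = B + (j' - B) := by omega
        rw [this, pow_add, yy_pow_eq_zero, zero_mul]
      rw [hz, mul_zero, map_zero]
      funext pq
      have h2 := pq.2.isLt
      rw [if_neg (by omega)]
      rfl
  · have hz : xx F A B ^ i' = 0 := by
      have : i' = A + (i' - A) := by omega
      rw [this, pow_add, xx_pow_eq_zero, zero_mul]
    rw [hz, zero_mul, map_zero]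
    funext pq
    have h1 := pq.1.isLt
    rw [if_neg (by omega)]
    rfl

set_option maxHeartbeats 1000000 in
lemma intertwineL (A B : ℕ) :
    (EE F A B).toLinearMap ∘ₗ LinearMap.mulLeft F (tt F A B)
      = (jordanBlock F A ⊗ₖ jordanBlock F B - 1).mulVecLin ∘ₗ (EE F A B).toLinearMap := by
  apply (tpBasis F A B).ext
  rintro ⟨i, j⟩
  simp only [LinearMap.comp_apply, LinearMap.mulLeft_apply, LinearEquiv.coe_coe]
  rw [tpBasis_apply]
  have expand : tt F A B * (xx F A B ^ (i:ℕ) * yy F A B ^ (j:ℕ)) =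
      xx F A B ^ ((i:ℕ)+1) * yy F A B ^ (j:ℕ) + xx F A B ^ (i:ℕ) * yy F A B ^ ((j:ℕ)+1)
        + xx F A B ^ ((i:ℕ)+1) * yy F A B ^ ((j:ℕ)+1) := by
    rw [tt]; ring
  rw [expand, map_add, map_add, EE_monomial, EE_monomial, EE_monomial, EE_monomial]
  funext pq
  obtain ⟨p1, p2⟩ := pq
  have h1 := p1.isLt
  have h2 := p2.isLt
  have hi := i.isLt
  have hj := j.isLt
  simp only [Pi.add_apply, Matrix.mulVecLin_apply, Matrix.mulVec, dotProduct,
    Matrix.sub_apply, Matrix.kroneckerMap_apply, Matrix.one_apply, jordanBlock,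
    Matrix.of_apply, Prod.mk.injEq, Prod.ext_iff, Fin.ext_iff]
  rw [Finset.sum_eq_single (⟨A - 1 - i, by omega⟩, (⟨B - 1 - j, by omega⟩ : Fin B))]
  · dsimp only
    split_ifs <;> first | (exfalso; omega) | norm_num
  · rintro ⟨q1, q2⟩ - hq
    have hq1 := q1.isLt
    have hq2 := q2.isLt
    simp only [ne_eq, Prod.mk.injEq, not_and, Fin.ext_iff] at hq
    dsimp only
    split_ifs <;> first | (exfalso; omega) | norm_num
  · intro h; exact absurd (Finset.mem_univ _) h
end

noncomputable section
open Matrix Kronecker Polynomial TensorProduct LinearMap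
variable {F : Type*} [Field F]

lemma comp_pow_of_comp {V V₂ : Type*} [AddCommGroup V] [Module F V] [AddCommGroup V₂]
    [Module F V₂] (e : V →ₗ[F] V₂) (f : V →ₗ[F] V) (g : V₂ →ₗ[F] V₂)
    (h : e ∘ₗ f = g ∘ₗ e) (m : ℕ) : e ∘ₗ (f ^ m) = (g ^ m) ∘ₗ e := by
  induction m with
  | zero => ext v; rfl
  | succ n ih =>
    rw [pow_succ, pow_succ, Module.End.mul_eq_comp, Module.End.mul_eq_comp, ← LinearMap.comp_assoc,
      ih, LinearMap.comp_assoc, h, LinearMap.comp_assoc]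

lemma finrank_range_conj {V V₂ : Type*} [AddCommGroup V] [Module F V] [AddCommGroup V₂]
    [Module F V₂] (e : V ≃ₗ[F] V₂) (f : V →ₗ[F] V) (g : V₂ →ₗ[F] V₂)
    (h : e.toLinearMap ∘ₗ f = g ∘ₗ e.toLinearMap) (m : ℕ) :
    Module.finrank F (LinearMap.range (g ^ m)) = Module.finrank F (LinearMap.range (f ^ m)) := by
  have h2 := comp_pow_of_comp e.toLinearMap f g h m
  have h3 : LinearMap.range (g ^ m) = (LinearMap.range (f ^ m)).map e.toLinearMap := by
    have h4 : LinearMap.range ((g ^ m) ∘ₗ e.toLinearMap) = LinearMap.range (g ^ m) := by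
      rw [LinearMap.range_comp, LinearEquiv.range, Submodule.map_top]
    rw [← h4, ← h2, LinearMap.range_comp]
  rw [h3]
  exact LinearEquiv.finrank_map_eq e _

lemma mulVecLin_matrix_pow {n : Type*} [Fintype n] [DecidableEq n] (M : Matrix n n F) (m : ℕ) :
    (M ^ m).mulVecLin = M.mulVecLin ^ m := by
  induction m with
  | zero => simp [Matrix.mulVecLin_one]; rfl
  | succ k ih => rw [pow_succ, Matrix.mulVecLin_mul, ih, pow_succ, Module.End.mul_eq_comp]

lemma rank_pow_eq_mulLeft (A B m : ℕ) :
    ((jordanBlock F A ⊗ₖ jordanBlock F B - 1) ^ m).rank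
      = Module.finrank F (LinearMap.range ((LinearMap.mulLeft F (tt F A B)) ^ m)) := by
  have : ((jordanBlock F A ⊗ₖ jordanBlock F B - 1) ^ m).rank
      = Module.finrank F (LinearMap.range ((jordanBlock F A ⊗ₖ jordanBlock F B - 1).mulVecLin ^ m)) := by
    rw [Matrix.rank, mulVecLin_matrix_pow]
  rw [this]
  exact finrank_range_conj (EE F A B) _ _ (intertwineL F A B) m
end
lemma fin_val_sub_one {q:ℕ} [NeZero q] (e : Fin q) :
    ((e - 1 : Fin q)).val = if e.val = 0 then q - 1 else e.val - 1 := by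
  have he := e.isLt
  rcases LE.le.eq_or_lt (Nat.one_le_iff_ne_zero.mpr (NeZero.ne q)) with h1 | h1
  · have h2 : ((e - 1 : Fin q)).val < q := Fin.isLt _
    rw [if_pos (by omega)]; omega
  · rw [Fin.sub_def]
    have h2 : (1 : Fin q).val = 1 := by rw [Fin.val_one']; exact Nat.mod_eq_of_lt h1
    rw [h2]
    rcases Nat.eq_zero_or_pos e.val with h0 | h0
    · rw [if_pos h0, h0]
      show (q - 1 + 0) % q = q - 1
      rw [Nat.add_zero]
      exact Nat.mod_eq_of_lt (by omega)
    · rw [if_neg (by omega)]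
      show (q - 1 + e.val) % q = e.val - 1
      have h3 : q - 1 + e.val = q + (e.val - 1) := by omega
      rw [h3, Nat.add_mod_left]
      exact Nat.mod_eq_of_lt (by omega)

lemma fin_val_add_one {q:ℕ} [NeZero q] (e : Fin q) :
    ((e + 1 : Fin q)).val = if e.val = q - 1 then 0 else e.val + 1 := by
  rw [Fin.add_def]
  have he := e.isLt
  rcases LE.le.eq_or_lt (Nat.one_le_iff_ne_zero.mpr (NeZero.ne q)) with h1 | h1
  · rw [if_pos (by omega)]
    have h3 := (1 : Fin q).isLt
    show (e.val + (1:Fin q).val) % q = 0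
    have h4 : e.val + (1:Fin q).val = 0 := by omega
    rw [h4, Nat.zero_mod]
  · have h2 : (1 : Fin q).val = 1 := by rw [Fin.val_one']; exact Nat.mod_eq_of_lt h1
    show (e.val + (1:Fin q).val) % q = _
    rw [h2]
    rcases Nat.lt_or_ge (e.val + 1) q with h0 | h0
    · rw [if_neg (by omega)]
      exact Nat.mod_eq_of_lt h0
    · rw [if_pos (by omega)]
      have h3 : e.val + 1 = q := by omega
      rw [h3, Nat.mod_self]

noncomputable section
open Matrix Kronecker Polynomial TensorProduct LinearMap
variable (F : Type*) [Field F] (q r s : ℕ) [NeZero q]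

/-- The model module: q × q copies of F[x,y]/(x^r,y^s). -/
abbrev UM := Fin q × Fin q → TP F r s

/-- twisted shift maps on the model module -/
def Gmap (c : Fin q → ℕ) (t : Fin q) : UM F q r s →ₗ[F] UM F q r s :=
  LinearMap.pi fun ef => (LinearMap.mulLeft F (tt F r s ^ (c ef.1))) ∘ₗ
    LinearMap.proj (ef.1 - t, ef.2)

lemma Gmap_apply (c : Fin q → ℕ) (t : Fin q) (g : UM F q r s) (e f : Fin q) :
    Gmap F q r s c t g (e, f) = tt F r s ^ (c e) * g (e - t, f) := rfl

lemma Gmap_comp (c c' : Fin q → ℕ) (t t' : Fin q) :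
    Gmap F q r s c t ∘ₗ Gmap F q r s c' t'
      = Gmap F q r s (fun e => c e + c' (e - t)) (t + t') := by
  apply LinearMap.ext; intro g
  funext ef
  obtain ⟨e, f⟩ := ef
  simp only [LinearMap.comp_apply, Gmap_apply, pow_add]
  rw [mul_assoc, sub_sub]

/-- the main shift operator -/
def Dmap : UM F q r s →ₗ[F] UM F q r s :=
  Gmap F q r s (fun e => if e.val = 0 then 1 else 0) 1

open Fin.NatCast in
lemma Dmap_pow (m : ℕ) :
    (Dmap F q r s) ^ m = Gmap F q r s (fun e => (m + (q - 1 - e.val)) / q) (m : Fin q) := by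
  induction m with
  | zero =>
    have : ∀ e : Fin q, (0 + (q - 1 - e.val)) / q = 0 := by
      intro e; apply Nat.div_eq_of_lt; have := e.isLt; omega
    rw [pow_zero]
    apply LinearMap.ext; intro g
    funext ef
    obtain ⟨e, f⟩ := ef
    rw [Module.End.one_apply, Gmap_apply, this e, pow_zero, one_mul, Nat.cast_zero, sub_zero]
  | succ m ih =>
    rw [pow_succ', ih]
    show Dmap F q r s ∘ₗ _ = _
    rw [Dmap, Gmap_comp]
    have hq : 0 < q := Nat.pos_of_ne_zero (NeZero.ne q)
    congr 1
    · funext e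
      rw [fin_val_sub_one]
      have he := e.isLt
      rcases Nat.eq_zero_or_pos e.val with h0 | h0
      · rw [if_pos h0, if_pos h0, h0]
        have h2 : q - 1 - (q-1) = 0 := by omega
        have h3 : (m + 1 + (q - 1 - 0)) / q = (m + q) / q := by congr 1; omega
        rw [h2, h3, Nat.add_div_right _ hq, Nat.add_zero, Nat.add_comm 1]
      · rw [if_neg (by omega), if_neg (by omega), Nat.zero_add]
        congr 1
        omega
    · rw [Nat.cast_add, Nat.cast_one, add_comm]

/-- a pi-indexed family map and its range -/
lemma Gmap_eq_comp (c : Fin q → ℕ) (t : Fin q) :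
    Gmap F q r s c t =
      (LinearMap.pi fun ef : Fin q × Fin q =>
        (LinearMap.mulLeft F (tt F r s ^ (c ef.1))) ∘ₗ LinearMap.proj ef) ∘ₗ
      (LinearEquiv.funCongrLeft F (TP F r s)
        (Equiv.prodCongr (Equiv.subRight t) (Equiv.refl (Fin q)))).toLinearMap := by
  apply LinearMap.ext; intro g
  funext ef
  rfl

lemma range_pi_map {ι : Type*} [Fintype ι] [DecidableEq ι] {M : ι → Type*}
    [∀ i, AddCommGroup (M i)] [∀ i, Module F (M i)] (f : ∀ i, M i →ₗ[F] M i) :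
    LinearMap.range (LinearMap.pi fun i => (f i) ∘ₗ LinearMap.proj i)
      = Submodule.pi Set.univ (fun i => LinearMap.range (f i)) := by
  ext x
  constructor
  · rintro ⟨g, rfl⟩ i -
    exact ⟨g i, rfl⟩
  · intro hx
    choose g hg using fun i => hx i (Set.mem_univ i)
    exact ⟨g, funext fun i => hg i⟩

def piSubmoduleEquiv {ι : Type*} [Fintype ι] {M : ι → Type*}
    [∀ i, AddCommGroup (M i)] [∀ i, Module F (M i)] (p : ∀ i, Submodule F (M i)) :
    (Submodule.pi Set.univ p) ≃ₗ[F] ∀ i, p i where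
  toFun := fun x i => ⟨x.1 i, x.2 i (Set.mem_univ i)⟩
  map_add' := fun a b => rfl
  map_smul' := fun c a => rfl
  invFun := fun v => ⟨fun i => v i, fun i _ => (v i).2⟩
  left_inv := fun x => rfl
  right_inv := fun v => rfl

lemma finrank_range_Gmap [NeZero r] [NeZero s] (c : Fin q → ℕ) (t : Fin q) :
    Module.finrank F (LinearMap.range (Gmap F q r s c t))
      = ∑ ef : Fin q × Fin q,
          Module.finrank F (LinearMap.range ((LinearMap.mulLeft F (tt F r s)) ^ (c ef.1))) := by
  rw [Gmap_eq_comp]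
  rw [LinearMap.range_comp_of_range_eq_top _ (LinearEquiv.range _)]
  rw [range_pi_map]
  rw [(piSubmoduleEquiv F (fun i : Fin q × Fin q => LinearMap.range (LinearMap.mulLeft F (tt F r s ^ c i.1)))).finrank_eq]
  rw [Module.finrank_pi_fintype]
  congr 1
  funext ef
  rw [LinearMap.pow_mulLeft]
end

noncomputable section
open Matrix Kronecker Polynomial TensorProduct LinearMap
variable (F : Type*) [Field F] (q r s : ℕ) [NeZero q] [NeZero r] [NeZero s]

/-- The assembly map from the model module to F[x,y]/(x^{qr},y^{qs}). -/
def Psi : UM F q r s →ₗ[F] TP F (q*r) (q*s) :=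
  ∑ ef : Fin q × Fin q,
    (LinearMap.mulLeft F (tt F (q*r) (q*s) ^ (ef.1.val) * xx F (q*r) (q*s) ^ (ef.2.val))) ∘ₗ
      (frob F q r s).toLinearMap ∘ₗ LinearMap.proj ef

lemma Psi_apply (g : UM F q r s) :
    Psi F q r s g = ∑ ef : Fin q × Fin q,
      tt F (q*r) (q*s) ^ (ef.1.val) * xx F (q*r) (q*s) ^ (ef.2.val) * frob F q r s (g ef) := by
  rw [Psi, LinearMap.sum_apply]
  rfl

/-- the x-shift operator on the model module -/
def DxMap : UM F q r s →ₗ[F] UM F q r s :=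
  LinearMap.pi fun ef => (LinearMap.mulLeft F (xx F r s ^ (if ef.2.val = 0 then 1 else 0))) ∘ₗ
    LinearMap.proj (ef.1, ef.2 - 1)

lemma Psi_D (hTq : tt F (q*r) (q*s) ^ q = frob F q r s (tt F r s)) :
    Psi F q r s ∘ₗ Dmap F q r s
      = LinearMap.mulLeft F (tt F (q*r) (q*s)) ∘ₗ Psi F q r s := by
  apply LinearMap.ext; intro g
  simp only [LinearMap.comp_apply, Psi_apply, LinearMap.mulLeft_apply, Finset.mul_sum]
  refine Fintype.sum_equiv ((Equiv.subRight (1 : Fin q)).prodCongr (Equiv.refl (Fin q)))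
    _ _ ?_
  rintro ⟨e, f⟩
  show tt F (q*r) (q*s) ^ (e.val) * xx F (q*r) (q*s) ^ (f.val)
        * frob F q r s ((Dmap F q r s g) (e, f))
      = tt F (q*r) (q*s) * (tt F (q*r) (q*s) ^ (((e - 1 : Fin q)).val)
          * xx F (q*r) (q*s) ^ (f.val) * frob F q r s (g (e - 1, f)))
  rw [Dmap, Gmap_apply]
  have he := e.isLt
  have hq1 : 0 < q := Nat.pos_of_ne_zero (NeZero.ne q)
  rcases Nat.eq_zero_or_pos e.val with h0 | h0
  · rw [if_pos h0, fin_val_sub_one, if_pos h0, pow_one, _root_.map_mul, ← hTq, h0, pow_zero]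
    have h3 : tt F (q*r) (q*s) * tt F (q*r) (q*s) ^ (q-1) = tt F (q*r) (q*s) ^ q := by
      rw [← pow_succ']
      congr 1
      omega
    rw [← h3]
    ring
  · rw [if_neg (by omega), fin_val_sub_one, if_neg (by omega), pow_zero, one_mul]
    have h3 : tt F (q*r) (q*s) * tt F (q*r) (q*s) ^ (e.val - 1) = tt F (q*r) (q*s) ^ (e.val) := by
      rw [← pow_succ']
      congr 1
      omega
    rw [← h3]
    ring

lemma Psi_Dx :
    Psi F q r s ∘ₗ DxMap F q r s
      = LinearMap.mulLeft F (xx F (q*r) (q*s)) ∘ₗ Psi F q r s := by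
  apply LinearMap.ext; intro g
  simp only [LinearMap.comp_apply, Psi_apply, LinearMap.mulLeft_apply, Finset.mul_sum]
  refine Fintype.sum_equiv ((Equiv.refl (Fin q)).prodCongr (Equiv.subRight (1 : Fin q)))
    _ _ ?_
  rintro ⟨e, f⟩
  show tt F (q*r) (q*s) ^ (e.val) * xx F (q*r) (q*s) ^ (f.val)
        * frob F q r s ((DxMap F q r s g) (e, f))
      = xx F (q*r) (q*s) * (tt F (q*r) (q*s) ^ (e.val)
          * xx F (q*r) (q*s) ^ (((f - 1 : Fin q)).val) * frob F q r s (g (e, f - 1)))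
  have hDx : (DxMap F q r s g) (e, f)
      = xx F r s ^ (if f.val = 0 then 1 else 0) * g (e, f - 1) := rfl
  rw [hDx]
  have hf := f.isLt
  have hq1 : 0 < q := Nat.pos_of_ne_zero (NeZero.ne q)
  rcases Nat.eq_zero_or_pos f.val with h0 | h0
  · rw [if_pos h0, fin_val_sub_one, if_pos h0, pow_one, _root_.map_mul, frob_xx, h0, pow_zero]
    have h3 : xx F (q*r) (q*s) * xx F (q*r) (q*s) ^ (q-1) = xx F (q*r) (q*s) ^ q := by
      rw [← pow_succ']
      congr 1
      omega
    rw [← h3]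
    ring
  · rw [if_neg (by omega), fin_val_sub_one, if_neg (by omega), pow_zero, one_mul]
    have h3 : xx F (q*r) (q*s) * xx F (q*r) (q*s) ^ (f.val - 1) = xx F (q*r) (q*s) ^ (f.val) := by
      rw [← pow_succ']
      congr 1
      omega
    rw [← h3]
    ring
end

noncomputable section
open Matrix Kronecker Polynomial TensorProduct LinearMap
variable (F : Type*) [Field F] (q r s : ℕ) [NeZero q] [NeZero r] [NeZero s]

lemma one_mem_range_Psi : (1 : TP F (q*r) (q*s)) ∈ LinearMap.range (Psi F q r s) := by
  refine ⟨Pi.single ((0 : Fin q), (0 : Fin q)) 1, ?_⟩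
  rw [Psi_apply]
  rw [Finset.sum_eq_single ((0 : Fin q), (0 : Fin q))]
  · simp
  · rintro ef - hef
    rw [Pi.single_eq_of_ne hef, map_zero, mul_zero]
  · intro h; exact absurd (Finset.mem_univ _) h

lemma adjoin_smul_range_Psi (hTq : tt F (q*r) (q*s) ^ q = frob F q r s (tt F r s))
    (c : TP F (q*r) (q*s))
    (hc : c ∈ Algebra.adjoin F {xx F (q*r) (q*s), tt F (q*r) (q*s)})
    (u : TP F (q*r) (q*s)) (hu : u ∈ LinearMap.range (Psi F q r s)) :
    c * u ∈ LinearMap.range (Psi F q r s) := by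
  induction hc using Algebra.adjoin_induction generalizing u with
  | mem z hz =>
    rcases hu with ⟨g, rfl⟩
    simp only [Set.mem_insert_iff, Set.mem_singleton_iff] at hz
    rcases hz with rfl | rfl
    · exact ⟨DxMap F q r s g, by rw [← LinearMap.comp_apply, Psi_Dx]; rfl⟩
    · exact ⟨Dmap F q r s g, by rw [← LinearMap.comp_apply, Psi_D F q r s hTq]; rfl⟩
  | algebraMap t =>
    rw [← Algebra.smul_def]
    exact Submodule.smul_mem _ t hu
  | add z w hz hw ihz ihw =>
    rw [add_mul]
    exact Submodule.add_mem _ (ihz u hu) (ihw u hu)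
  | mul z w hz hw ihz ihw =>
    rw [mul_assoc]
    exact ihz _ (ihw u hu)

lemma yy_mem_adjoin :
    yy F (q*r) (q*s) ∈ Algebra.adjoin F {xx F (q*r) (q*s), tt F (q*r) (q*s)} := by
  set x := xx F (q*r) (q*s)
  set y := yy F (q*r) (q*s)
  set T := tt F (q*r) (q*s)
  set w : TP F (q*r) (q*s) := ∑ i ∈ Finset.range (q*r), (-x) ^ i with hw
  have hxqr : x ^ (q*r) = 0 := xx_pow_eq_zero F
  have hgeom : w * (-x - 1) = (-x) ^ (q*r) - 1 := geom_sum_mul (-x) (q*r)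
  have hnegx : (-x) ^ (q*r) = 0 := by
    rw [neg_pow, hxqr, mul_zero]
  have hw1 : w * (x + 1) = 1 := by
    rw [hnegx] at hgeom
    linear_combination -hgeom
  have hy : y = (T - x) * w := by
    have h1 : T - x = y * (x + 1) := by
      rw [show T = x + y + x * y from rfl]; ring
    calc y = y * (w * (x+1)) := by rw [hw1, mul_one]
      _ = (y * (x+1)) * w := by ring
      _ = (T - x) * w := by rw [← h1]
  rw [hy]
  have hxmem : x ∈ Algebra.adjoin F {x, T} := Algebra.subset_adjoin (by simp)
  have hTmem : T ∈ Algebra.adjoin F {x, T} := Algebra.subset_adjoin (by simp)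
  have hwmem : w ∈ Algebra.adjoin F {x, T} := by
    rw [hw]
    exact Subalgebra.sum_mem _ fun i _ => pow_mem (neg_mem hxmem) i
  exact mul_mem (sub_mem hTmem hxmem) hwmem

lemma range_Psi_top (hTq : tt F (q*r) (q*s) ^ q = frob F q r s (tt F r s)) :
    LinearMap.range (Psi F q r s) = ⊤ := by
  have hmono : ∀ (i : Fin (q*r)) (j : Fin (q*s)),
      xx F (q*r) (q*s) ^ (i:ℕ) * yy F (q*r) (q*s) ^ (j:ℕ) ∈ LinearMap.range (Psi F q r s) := by
    intro i j
    have hc : xx F (q*r) (q*s) ^ (i:ℕ) * yy F (q*r) (q*s) ^ (j:ℕ)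
        ∈ Algebra.adjoin F {xx F (q*r) (q*s), tt F (q*r) (q*s)} := by
      exact mul_mem (pow_mem (Algebra.subset_adjoin (by simp)) _)
        (pow_mem (yy_mem_adjoin F q r s) _)
    have := adjoin_smul_range_Psi F q r s hTq _ hc 1 (one_mem_range_Psi F q r s)
    rwa [mul_one] at this
  rw [eq_top_iff, ← (tpBasis F (q*r) (q*s)).span_eq]
  refine Submodule.span_le.mpr ?_
  rintro v ⟨⟨i, j⟩, rfl⟩
  rw [tpBasis_apply]
  exact hmono i j

lemma finrank_UM : Module.finrank F (UM F q r s) = (q*r) * (q*s) := by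
  rw [Module.finrank_pi_fintype, Finset.sum_congr rfl (fun ef _ => tp_finrank F)]
  simp [Finset.sum_const]
  ring

def PsiEquiv (hTq : tt F (q*r) (q*s) ^ q = frob F q r s (tt F r s)) :
    UM F q r s ≃ₗ[F] TP F (q*r) (q*s) := by
  refine LinearEquiv.ofBijective (Psi F q r s) ⟨?_, ?_⟩
  · rw [← LinearMap.ker_eq_bot, ← Submodule.finrank_eq_zero]
    have h1 := LinearMap.finrank_range_add_finrank_ker (Psi F q r s)
    rw [range_Psi_top F q r s hTq, finrank_top, finrank_UM, tp_finrank] at h1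
    omega
  · rw [← LinearMap.range_eq_top]
    exact range_Psi_top F q r s hTq

lemma finrank_Dmap_pow (hTq : tt F (q*r) (q*s) ^ q = frob F q r s (tt F r s)) (m : ℕ) :
    Module.finrank F (LinearMap.range ((LinearMap.mulLeft F (tt F (q*r) (q*s))) ^ m))
      = Module.finrank F (LinearMap.range ((Dmap F q r s) ^ m)) := by
  refine finrank_range_conj (PsiEquiv F q r s hTq) _ _ ?_ m
  have : (PsiEquiv F q r s hTq).toLinearMap = Psi F q r s := rfl
  rw [this]
  exact (Psi_D F q r s hTq).symm ▸ (Psi_D F q r s hTq)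

/-- the main rank computation -/
lemma rank_big (hTq : tt F (q*r) (q*s) ^ q = frob F q r s (tt F r s)) (m : ℕ) :
    ((jordanBlock F (q*r) ⊗ₖ jordanBlock F (q*s) - 1) ^ m).rank
      = ∑ ef : Fin q × Fin q,
          ((jordanBlock F r ⊗ₖ jordanBlock F s - 1) ^ ((m + (q - 1 - ef.1.val)) / q)).rank := by
  rw [rank_pow_eq_mulLeft, finrank_Dmap_pow F q r s hTq m, Dmap_pow, finrank_range_Gmap]
  congr 1
  funext ef
  rw [rank_pow_eq_mulLeft]
end

lemma count_lt {n : ℕ} (f : Fin n → ℕ) (hf : Antitone f) (m : ℕ) (i : Fin n) :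
    (m < f i) ↔ (i : ℕ) < (Finset.univ.filter (fun j => m < f j)).card := by
  constructor
  · intro h
    have hsub : Finset.Iic i ⊆ Finset.univ.filter (fun j => m < f j) := by
      intro j hj
      simp only [Finset.mem_filter, Finset.mem_univ, true_and]
      exact lt_of_lt_of_le h (hf (Finset.mem_Iic.mp hj))
    have hc := Finset.card_le_card hsub
    rw [Fin.card_Iic] at hc
    omega
  · intro h
    by_contra hc
    push_neg at hc
    have hsub : Finset.univ.filter (fun j => m < f j) ⊆ Finset.Iio i := by
      intro j hj
      simp only [Finset.mem_filter, Finset.mem_univ, true_and] at hj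
      rw [Finset.mem_Iio]
      by_contra hji
      push_neg at hji
      exact absurd (lt_of_lt_of_le hj (le_trans (hf hji) hc)) (lt_irrefl m)
    have hcard := Finset.card_le_card hsub
    rw [Fin.card_Iio] at hcard
    omega

lemma sum_sub_rec {n : ℕ} (f : Fin n → ℕ) (m : ℕ) :
    ∑ i, (f i - m) = ∑ i, (f i - (m+1)) + (Finset.univ.filter (fun j => m < f j)).card := by
  rw [Finset.card_filter, ← Finset.sum_add_distrib]
  apply Finset.sum_congr rfl
  intro i _
  by_cases h : m < f i
  · rw [if_pos h]; omega
  · rw [if_neg h]; omega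

lemma partition_unique {n : ℕ} (f g : Fin n → ℕ) (hf : Antitone f) (hg : Antitone g)
    (h : ∀ m, ∑ i, (f i - m) = ∑ i, (g i - m)) : ∀ i, f i = g i := by
  have hcard : ∀ m, (Finset.univ.filter (fun j => m < f j)).card
      = (Finset.univ.filter (fun j => m < g j)).card := by
    intro m
    have h1 := sum_sub_rec f m
    have h2 := sum_sub_rec g m
    have h3 := h m
    have h4 := h (m+1)
    omega
  intro i
  have key : ∀ m, (m < f i ↔ m < g i) := by
    intro m
    rw [count_lt f hf m i, count_lt g hg m i, hcard m]
  have k1 := key (f i)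
  have k2 := key (g i)
  omega

lemma div_sum_identity (q L m : ℕ) (hq : 0 < q) :
    ∑ e : Fin q, (L - (m + (q - 1 - (e:ℕ)))/q) = q * L - m := by
  rw [Fin.sum_univ_eq_sum_range (fun e => L - (m + (q - 1 - e))/q) q]
  have hm := Nat.div_add_mod m q
  set a := m / q with ha
  set b := m % q with hb
  have hbq : b < q := Nat.mod_lt _ hq
  have hdiv : ∀ e ∈ Finset.range q,
      L - (m + (q - 1 - e))/q = if e < b then L - (a+1) else L - a := by
    intro e he
    rw [Finset.mem_range] at he
    rcases Nat.lt_or_ge e b with hcase | hcase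
    · rw [if_pos hcase]
      congr 1
      have e0 : q*(a+1) = q*a + q := by ring
      have h5 : m + (q - 1 - e) = q*(a+1) + (b - 1 - e) := by omega
      rw [h5, Nat.mul_add_div hq, Nat.div_eq_of_lt (by omega), Nat.add_zero]
    · rw [if_neg (by omega)]
      congr 1
      have h5 : m + (q - 1 - e) = q*a + (b + (q - 1 - e)) := by omega
      rw [h5, Nat.mul_add_div hq, Nat.div_eq_of_lt (by omega), Nat.add_zero]
  rw [Finset.sum_congr rfl hdiv]
  have hsplit : ∑ e ∈ Finset.range q, (if e < b then L - (a+1) else L - a)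
      = b * (L - (a+1)) + (q - b) * (L - a) := by
    rw [Finset.range_eq_Ico, ← Finset.sum_Ico_consecutive _ (Nat.zero_le b) hbq.le]
    have e1 : ∑ e ∈ Finset.Ico 0 b, (if e < b then L - (a+1) else L - a) = b * (L - (a+1)) := by
      rw [Finset.sum_congr rfl (fun e he => if_pos (Finset.mem_Ico.mp he).2)]
      rw [Finset.sum_const, Nat.card_Ico, Nat.sub_zero, smul_eq_mul]
    have e2 : ∑ e ∈ Finset.Ico b q, (if e < b then L - (a+1) else L - a) = (q - b) * (L - a) := by
      rw [Finset.sum_congr rfl (fun e he => if_neg (by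
        have := (Finset.mem_Ico.mp he).1; omega))]
      rw [Finset.sum_const, Nat.card_Ico, smul_eq_mul]
    rw [e1, e2]
  rw [hsplit]
  rcases Nat.lt_or_ge a L with hcase | hcase
  · have hd : L = a + 1 + (L - (a+1)) := by omega
    set d := L - (a+1) with hdd
    have hLa : L - a = d + 1 := by omega
    have h4 : q * L = q*a + q + q*d := by
      calc q * L = q * (a + 1 + d) := by rw [← hd]
        _ = q*a + q + q*d := by ring
    have h5 : (q-b)*(d+1) = q*d + q - (b*d + b) := by
      rw [Nat.sub_mul]
      have e3 : q*(d+1) = q*d + q := by ring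
      have e4 : b*(d+1) = b*d + b := by ring
      rw [e3, e4]
    have h6 : b*d ≤ q*d := Nat.mul_le_mul_right d hbq.le
    rw [hLa]
    omega
  · have hz1 : L - (a+1) = 0 := by omega
    have hz2 : L - a = 0 := by omega
    have h7 : q * L ≤ q * a := Nat.mul_le_mul_left q hcase
    have h8 : q * a ≤ q * a + b := Nat.le_add_right _ _
    rw [hz1, hz2]
    omega

lemma sum_div_blocks (q : ℕ) (hq : 0 < q) (h : ℕ → ℕ) (r : ℕ) :
    ∑ i ∈ Finset.range (q*r), h (i/q) = ∑ j ∈ Finset.range r, q * h j := by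
  induction r with
  | zero => simp
  | succ n ih =>
    have hmul : q*(n+1) = q*n + q := by ring
    rw [hmul, Finset.range_add, Finset.sum_union (Finset.disjoint_range_addLeftEmbedding _ _),
      ih, Finset.sum_map, Finset.sum_range_succ]
    congr 1
    have : ∀ i ∈ Finset.range q, h ((addLeftEmbedding (q*n)) i / q) = h n := by
      intro i hi
      rw [Finset.mem_range] at hi
      have : (addLeftEmbedding (q*n)) i = q*n + i := rfl
      rw [this]
      congr 1
      rw [Nat.mul_add_div hq, Nat.div_eq_of_lt hi, Nat.add_zero]
    rw [Finset.sum_congr rfl this, Finset.sum_const, Finset.card_range, smul_eq_mul]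

/-- `λ(p^k r, p^k s, p)` is the `p^k`-multiple of `λ(r,s,p)`: its `q`-th part
(0-indexed) equals `p^k · λ_{⌊q/p^k⌋}`, i.e. each part `λ_i` is multiplied by
`p^k` and repeated `p^k` times. -/
theorem stmt15 (F : Type*) [Field F] (p : ℕ) [CharP F p] (hp : p.Prime)
    (k r s : ℕ) (hr : 1 ≤ r) (hrs : r ≤ s)
    (lam : Fin r → ℕ) (lam' : Fin (p ^ k * r) → ℕ)
    (h1 : IsJordanSeq (jordanBlock F r ⊗ₖ jordanBlock F s) lam)
    (h2 : IsJordanSeq (jordanBlock F (p ^ k * r) ⊗ₖ jordanBlock F (p ^ k * s)) lam') :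
    ∀ i : Fin (p ^ k * r), ∀ h : (i : ℕ) / p ^ k < r,
      lam' i = p ^ k * lam ⟨(i : ℕ) / p ^ k, h⟩ := by
  classical
  haveI : NeZero (p ^ k) := ⟨pow_ne_zero k hp.ne_zero⟩
  haveI : NeZero r := ⟨by omega⟩
  haveI : NeZero s := ⟨by omega⟩
  have hq : 0 < p ^ k := Nat.pos_of_ne_zero (NeZero.ne _)
  obtain ⟨hA1, hP1, hR1⟩ := h1
  obtain ⟨hA2, hP2, hR2⟩ := h2
  have hTq : tt F (p ^ k * r) (p ^ k * s) ^ (p ^ k) = frob F (p ^ k) r s (tt F r s) :=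
    tt_pow_q F p hp k (p ^ k) r s rfl (by omega) (by omega)
  have hbig := rank_big F (p ^ k) r s hTq
  -- the truncated-to-ℕ version of lam
  set lamN : ℕ → ℕ := fun j => if hj : j < r then lam ⟨j, hj⟩ else 0 with hlamN
  set μ : Fin (p ^ k * r) → ℕ := fun i => p ^ k * lamN ((i : ℕ) / p ^ k) with hμ
  have step1 : ∀ m : ℕ, ((jordanBlock F (p ^ k * r) ⊗ₖ jordanBlock F (p ^ k * s) - 1) ^ m).rank
      = p ^ k * ∑ j : Fin r, (p ^ k * lam j - m) := by
    intro m
    rw [hbig m]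
    rw [Finset.sum_congr rfl (fun ef _ => hR1 ((m + (p ^ k - 1 - (ef.1 : ℕ))) / p ^ k))]
    rw [Fintype.sum_prod_type]
    have inner : ∀ e : Fin (p ^ k),
        ∑ _f : Fin (p ^ k), ∑ j, (lam j - (m + (p ^ k - 1 - (e : ℕ))) / p ^ k)
          = p ^ k * ∑ j, (lam j - (m + (p ^ k - 1 - (e : ℕ))) / p ^ k) := by
      intro e
      rw [Finset.sum_const, Finset.card_univ, Fintype.card_fin, smul_eq_mul]
    rw [Finset.sum_congr rfl (fun e _ => inner e), ← Finset.mul_sum]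
    congr 1
    rw [Finset.sum_comm]
    apply Finset.sum_congr rfl
    intro j _
    exact div_sum_identity (p ^ k) (lam j) m hq
  have step2 : ∀ m : ℕ, ∑ i : Fin (p ^ k * r), (μ i - m)
      = p ^ k * ∑ j : Fin r, (p ^ k * lam j - m) := by
    intro m
    have e1 : ∑ i : Fin (p ^ k * r), (μ i - m)
        = ∑ i ∈ Finset.range (p ^ k * r), (fun t => p ^ k * lamN (t / p ^ k) - m) i :=
      Fin.sum_univ_eq_sum_range (fun t => p ^ k * lamN (t / p ^ k) - m) (p ^ k * r)
    rw [e1, sum_div_blocks (p ^ k) hq (fun t => p ^ k * lamN t - m) r, Finset.mul_sum]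
    rw [← Fin.sum_univ_eq_sum_range (fun j => p ^ k * (p ^ k * lamN j - m)) r]
    apply Finset.sum_congr rfl
    intro j _
    have : lamN (j : ℕ) = lam j := by
      rw [hlamN]
      simp only [j.isLt, dif_pos]
    rw [this]
  have hsums : ∀ m : ℕ, ∑ i, (lam' i - m) = ∑ i, (μ i - m) := by
    intro m
    rw [← hR2 m, step1 m, ← step2 m]
  have hAmu : Antitone μ := by
    intro i j hij
    rw [hμ]
    apply Nat.mul_le_mul_left
    have hdivle : (i : ℕ) / p ^ k ≤ (j : ℕ) / p ^ k := Nat.div_le_div_right hij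
    rw [hlamN]
    have hcomm : p ^ k * r = r * p ^ k := Nat.mul_comm _ _
    have hi' : (i : ℕ) / p ^ k < r := (Nat.div_lt_iff_lt_mul hq).mpr (hcomm ▸ i.isLt)
    have hj' : (j : ℕ) / p ^ k < r := (Nat.div_lt_iff_lt_mul hq).mpr (hcomm ▸ j.isLt)
    simp only [hi', hj', dif_pos]
    exact hA1 hdivle
  have heq := partition_unique lam' μ hA2 hAmu hsums
  intro i h
  rw [heq i, hμ]
  simp only [hlamN, h, dif_pos]
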